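/- Let ι be an index type, let x : ι → ℝ³ be a family of points whose affine span is all of ℝ³ (affineSpan ℝ (Set.range x) = ⊤), and let v : ι → ℝ³ be a family of vectors satisfying ⟪x i − x j, v i − v j⟫ = 0 for all i, j ∈ ι. Then there exist vectors a, ω ∈ ℝ³ such that v i = a + ω × (x i) for every i ∈ ι, where × denotes the cross product. -/

import Mathlib

open scoped RealInnerProductSpace

/-- The cross product on Euclidean 3-space. -/
noncomputable def cross3 (u v : EuclideanSpace ℝ (Fin 3)) : EuclideanSpace ℝ (Fin 3) :=
  (WithLp.equiv 2 (Fin 3 → ℝ)).symm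
    (crossProduct ((WithLp.equiv 2 (Fin 3 → ℝ)) u) ((WithLp.equiv 2 (Fin 3 → ℝ)) v))

lemma cross3_sub (ω p q : EuclideanSpace ℝ (Fin 3)) :
    cross3 ω (p - q) = cross3 ω p - cross3 ω q := by
  simp only [cross3, show (WithLp.equiv 2 (Fin 3 → ℝ)) (p - q) =
    (WithLp.equiv 2 (Fin 3 → ℝ)) p - (WithLp.equiv 2 (Fin 3 → ℝ)) q from rfl, map_sub]
  rfl

lemma cross3_apply (ω u : EuclideanSpace ℝ (Fin 3)) :
    cross3 ω u = (WithLp.equiv 2 (Fin 3 → ℝ)).symm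
      ![ω 1 * u 2 - ω 2 * u 1, ω 2 * u 0 - ω 0 * u 2, ω 0 * u 1 - ω 1 * u 0] := by
  simp only [cross3, cross_apply]
  rfl

/-- Any assignment of velocities to a family of points affinely spanning
Euclidean 3-space that preserves all pairwise distances to first order comes
from an infinitesimal motion of the whole space: `v i = a + ω × x i`. -/
theorem exists_euclidean_motion_of_isometric_velocities
    {ι : Type*} (x : ι → EuclideanSpace ℝ (Fin 3))
    (hx : affineSpan ℝ (Set.range x) = ⊤)
    (v : ι → EuclideanSpace ℝ (Fin 3))
    (hv : ∀ i j, ⟪x i - x j, v i - v j⟫ = 0) :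
    ∃ a ω : EuclideanSpace ℝ (Fin 3), ∀ i, v i = a + cross3 ω (x i) := by
  classical
  rcases isEmpty_or_nonempty ι with h | h
  · exact ⟨0, 0, fun i => h.elim i⟩
  obtain ⟨i₀⟩ := h
  set y : ι → EuclideanSpace ℝ (Fin 3) := fun i => x i - x i₀ with hy
  set w : ι → EuclideanSpace ℝ (Fin 3) := fun i => v i - v i₀ with hw
  -- the differences span the whole space
  have hspan : Submodule.span ℝ (Set.range y) = ⊤ := by
    have h1 : vectorSpan ℝ (Set.range x) = ⊤ := by
      rw [← direction_affineSpan, hx]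
      exact AffineSubspace.direction_top ℝ _ _
    have h2 := vectorSpan_eq_span_vsub_set_right ℝ (Set.mem_range_self (f := x) i₀)
    rw [h2] at h1
    have h3 : (· -ᵥ x i₀) '' Set.range x = Set.range y := by
      rw [← Set.range_comp]
      rfl
    rwa [h3] at h1
  -- diagonal vanishing and skew symmetry
  have hz : ∀ i, ⟪y i, w i⟫ = 0 := fun i => hv i i₀
  have skew0 : ∀ i j, ⟪y i, w j⟫ + ⟪y j, w i⟫ = 0 := by
    intro i j
    have h0 : ⟪y i - y j, w i - w j⟫ = 0 := by
      have e1 : y i - y j = x i - x j := sub_sub_sub_cancel_right _ _ _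
      have e2 : w i - w j = v i - v j := sub_sub_sub_cancel_right _ _ _
      rw [e1, e2]; exact hv i j
    rw [inner_sub_left (𝕜 := ℝ) (y i) (y j) (w i - w j),
      inner_sub_right (𝕜 := ℝ) (y i) (w i) (w j),
      inner_sub_right (𝕜 := ℝ) (y j) (w i) (w j), hz i, hz j] at h0
    linarith [h0]
  -- key: linear relations among the y's hold among the w's
  have key : ∀ c : ι →₀ ℝ, Finsupp.linearCombination ℝ y c = 0 →
      Finsupp.linearCombination ℝ w c = 0 := by
    intro c hc
    have horth : ∀ j, ⟪y j, Finsupp.linearCombination ℝ w c⟫ = 0 := by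
      intro j
      have h1 : ⟪y j, Finsupp.linearCombination ℝ w c⟫ =
          ∑ i ∈ c.support, c i * ⟪y j, w i⟫ := by
        rw [Finsupp.linearCombination_apply, Finsupp.sum, inner_sum]
        exact Finset.sum_congr rfl fun i _ => real_inner_smul_right _ _ _
      have h2 : ⟪Finsupp.linearCombination ℝ y c, w j⟫ =
          ∑ i ∈ c.support, c i * ⟪y i, w j⟫ := by
        rw [Finsupp.linearCombination_apply, Finsupp.sum, sum_inner]
        exact Finset.sum_congr rfl fun i _ => real_inner_smul_left _ _ _
      have h3 : ⟪Finsupp.linearCombination ℝ y c, w j⟫ = 0 := by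
        rw [hc]; exact inner_zero_left _
      rw [h2] at h3
      rw [h1]
      have h4 : (∑ i ∈ c.support, c i * ⟪y j, w i⟫) +
          (∑ i ∈ c.support, c i * ⟪y i, w j⟫) = 0 := by
        rw [← Finset.sum_add_distrib]
        refine Finset.sum_eq_zero fun i _ => ?_
        have := skew0 j i
        linear_combination c i * this
      linarith [h3, h4]
    have hmem : Finsupp.linearCombination ℝ w c ∈ Submodule.span ℝ (Set.range y) := by
      rw [hspan]; trivial
    have hself : ⟪Finsupp.linearCombination ℝ w c, Finsupp.linearCombination ℝ w c⟫ = 0 := by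
      refine Submodule.span_induction
        (p := fun z _ => ⟪z, Finsupp.linearCombination ℝ w c⟫ = 0) ?_ ?_ ?_ ?_ hmem
      · rintro z ⟨j, rfl⟩; exact horth j
      · exact inner_zero_left _
      · intro a b _ _ ha hb; rw [inner_add_left, ha, hb]; ring
      · intro r a _ ha; rw [real_inner_smul_left, ha]; ring
    exact inner_self_eq_zero.mp hself
  -- build the linear map A with A (y i) = w i
  have hsurj : LinearMap.range (Finsupp.linearCombination ℝ y) = ⊤ := by
    rw [Finsupp.range_linearCombination, hspan]
  obtain ⟨g, hg⟩ := (Finsupp.linearCombination ℝ y).exists_rightInverse_of_surjective hsurj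
  have hgy : ∀ z, Finsupp.linearCombination ℝ y (g z) = z := fun z =>
    congrFun (congrArg DFunLike.coe hg) z
  set A : EuclideanSpace ℝ (Fin 3) →ₗ[ℝ] EuclideanSpace ℝ (Fin 3) :=
    (Finsupp.linearCombination ℝ w).comp g with hA_def
  have hA : ∀ i, A (y i) = w i := by
    intro i
    have h0 : Finsupp.linearCombination ℝ y (g (y i) - Finsupp.single i 1) = 0 := by
      rw [map_sub, hgy, Finsupp.linearCombination_single, one_smul, sub_self]
    have h1 := key _ h0
    rw [map_sub, Finsupp.linearCombination_single, one_smul, sub_eq_zero] at h1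
    exact h1
  -- A is skew-symmetric
  have expand : ∀ c c' : ι →₀ ℝ,
      ⟪Finsupp.linearCombination ℝ y c, Finsupp.linearCombination ℝ w c'⟫ =
      ∑ i ∈ c.support, ∑ j ∈ c'.support, c i * c' j * ⟪y i, w j⟫ := by
    intro c c'
    rw [Finsupp.linearCombination_apply, Finsupp.linearCombination_apply,
      Finsupp.sum, Finsupp.sum, sum_inner]
    refine Finset.sum_congr rfl fun i _ => ?_
    rw [real_inner_smul_left, inner_sum, Finset.mul_sum]
    refine Finset.sum_congr rfl fun j _ => ?_
    rw [real_inner_smul_right]; ring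
  have hskew : ∀ z z', ⟪z, A z'⟫ + ⟪z', A z⟫ = 0 := by
    intro z z'
    have hAz : ∀ u, A u = Finsupp.linearCombination ℝ w (g u) := fun u => rfl
    have e1 : ⟪z, A z'⟫ = ∑ i ∈ (g z).support, ∑ j ∈ (g z').support,
        (g z) i * (g z') j * ⟪y i, w j⟫ := by
      have := expand (g z) (g z')
      rw [hgy] at this
      rw [hAz]; exact this
    have e2 : ⟪z', A z⟫ = ∑ i ∈ (g z).support, ∑ j ∈ (g z').support,
        (g z) i * (g z') j * ⟪y j, w i⟫ := by
      have := expand (g z') (g z)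
      rw [hgy] at this
      rw [hAz, this, Finset.sum_comm]
      exact Finset.sum_congr rfl fun i _ => Finset.sum_congr rfl fun j _ => by ring
    rw [e1, e2, ← Finset.sum_add_distrib]
    refine Finset.sum_eq_zero fun i _ => ?_
    rw [← Finset.sum_add_distrib]
    refine Finset.sum_eq_zero fun j _ => ?_
    have := skew0 i j
    linear_combination (g z) i * (g z') j * this
  -- the standard basis vectors
  set e : Fin 3 → EuclideanSpace ℝ (Fin 3) := fun k => EuclideanSpace.single k 1 with he
  have hcomp : ∀ (k : Fin 3) (z : EuclideanSpace ℝ (Fin 3)), ⟪e k, z⟫ = z k := by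
    intro k z
    rw [he]
    simp [EuclideanSpace.inner_single_left]
  have hM : ∀ k l : Fin 3, A (e l) k + A (e k) l = 0 := by
    intro k l
    have := hskew (e k) (e l)
    rwa [hcomp, hcomp] at this
  -- define ω
  set ω : EuclideanSpace ℝ (Fin 3) :=
    (WithLp.equiv 2 (Fin 3 → ℝ)).symm ![A (e 1) 2, A (e 2) 0, A (e 0) 1] with hω
  have hω0 : ω 0 = A (e 1) 2 := rfl
  have hω1 : ω 1 = A (e 2) 0 := rfl
  have hω2 : ω 2 = A (e 0) 1 := rfl
  -- A agrees with cross product by ω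
  have hAcross : ∀ u : EuclideanSpace ℝ (Fin 3), A u = cross3 ω u := by
    intro u
    have hurep : u = u 0 • e 0 + u 1 • e 1 + u 2 • e 2 := by
      ext k
      fin_cases k <;>
        simp [he, EuclideanSpace.single_apply]
    have hAu : A u = u 0 • A (e 0) + u 1 • A (e 1) + u 2 • A (e 2) := by
      conv_lhs => rw [hurep]
      simp [map_add, map_smul]
    have d0 : A (e 0) 0 = 0 := by have := hM 0 0; linarith
    have d1 : A (e 1) 1 = 0 := by have := hM 1 1; linarith
    have d2 : A (e 2) 2 = 0 := by have := hM 2 2; linarith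
    have s01 : A (e 1) 0 = -(A (e 0) 1) := by have := hM 0 1; linarith
    have s20 : A (e 0) 2 = -(A (e 2) 0) := by have := hM 0 2; linarith
    have s12 : A (e 2) 1 = -(A (e 1) 2) := by have := hM 1 2; linarith
    have hAuk : ∀ k, A u k = u 0 * A (e 0) k + u 1 * A (e 1) k + u 2 * A (e 2) k := by
      intro k; rw [hAu]; rfl
    have hc0 : cross3 ω u 0 = ω 1 * u 2 - ω 2 * u 1 := by rw [cross3_apply]; rfl
    have hc1 : cross3 ω u 1 = ω 2 * u 0 - ω 0 * u 2 := by rw [cross3_apply]; rfl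
    have hc2 : cross3 ω u 2 = ω 0 * u 1 - ω 1 * u 0 := by rw [cross3_apply]; rfl
    have case0 : A u 0 = cross3 ω u 0 := by
      rw [hAuk 0, hc0, hω1, hω2, d0, s01]; ring
    have case1 : A u 1 = cross3 ω u 1 := by
      rw [hAuk 1, hc1, hω2, hω0, d1, s12]; ring
    have case2 : A u 2 = cross3 ω u 2 := by
      rw [hAuk 2, hc2, hω0, hω1, d2, s20]; ring
    ext k
    fin_cases k
    exacts [case0, case1, case2]
  -- conclude
  refine ⟨v i₀ - cross3 ω (x i₀), ω, fun i => ?_⟩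
  have h1 : w i = cross3 ω (y i) := by rw [← hA i, hAcross]
  have h2 : cross3 ω (y i) = cross3 ω (x i) - cross3 ω (x i₀) := by
    rw [hy]; exact cross3_sub ω (x i) (x i₀)
  have h3 : v i - v i₀ = cross3 ω (x i) - cross3 ω (x i₀) := by
    rw [← h2, ← h1]
  have : v i = v i₀ + (cross3 ω (x i) - cross3 ω (x i₀)) := by
    rw [← h3]; abel
  rw [this]; abel
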